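/- Let 0<ν<1 and let z be a complex number with Re z>0. Then Γ(1+ν)^{-1}(1 + Σ_{n=1}^∞ ((n+1)^ν − n^ν) e^{-nz}) = (sin πν/π) ∫_0^∞ s^{-ν} (1−e^{-s}) / (s(1−e^{-z-s})) ds, where the series converges absolutely and the improper integral converges absolutely. -/

import Mathlib

open MeasureTheory Set Filter Topology
open scoped ENNReal NNReal


/-- Analytic continuation of the DG generating function `ψ` to the cut strip:
`ψ(z) = (sin πν / π) ∫_0^∞ s^{-ν} (1 − e^{-s}) / (s (1 − e^{-z-s})) ds`. -/
noncomputable def psiC (ν : ℝ) (z : ℂ) : ℂ :=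
  (Real.sin (Real.pi * ν) / Real.pi : ℝ) *
    ∫ s in Set.Ioi (0 : ℝ),
      (↑(s ^ (-ν)) * (1 - Complex.exp (-(s : ℂ)))) / ((s : ℂ) * (1 - Complex.exp (-z - (s : ℂ))))


lemma aux_one_sub_exp_le (y : ℝ) : 1 - Real.exp (-y) ≤ y := by
  have := Real.add_one_le_exp (-y); linarith

lemma aux_one_sub_exp_nonneg {y : ℝ} (hy : 0 ≤ y) : 0 ≤ 1 - Real.exp (-y) := by
  have : Real.exp (-y) ≤ 1 := Real.exp_le_one_iff.mpr (by linarith)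
  linarith

lemma gfun_contOn {ν a : ℝ} :
    ContinuousOn (fun s : ℝ => s ^ (-ν - 1) * (1 - Real.exp (-(a * s)))) (Ioi 0) := by
  apply ContinuousOn.mul
  · exact fun s hs => (Real.continuousAt_rpow_const s _ (Or.inl (ne_of_gt hs))).continuousWithinAt
  · exact (continuous_const.sub ((continuous_const.mul continuous_id).neg.rexp)).continuousOn

lemma integrableOn_gfun {ν : ℝ} (hν0 : 0 < ν) (hν1 : ν < 1) {a : ℝ} (ha : 0 ≤ a) :
    IntegrableOn (fun s : ℝ => s ^ (-ν - 1) * (1 - Real.exp (-(a * s)))) (Ioi 0) := by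
  rw [← Ioc_union_Ioi_eq_Ioi (zero_le_one (α := ℝ))]
  apply IntegrableOn.union
  · -- on Ioc 0 1, dominate by a * s ^ (-ν)
    have hint : IntegrableOn (fun s : ℝ => a * s ^ (-ν)) (Ioc 0 1) := by
      have h := (intervalIntegral.intervalIntegrable_rpow' (a := 0) (b := 1)
        (r := -ν) (by linarith))
      rw [intervalIntegrable_iff_integrableOn_Ioc_of_le zero_le_one] at h
      exact h.const_mul a
    refine Integrable.mono' hint ((gfun_contOn.mono Ioc_subset_Ioi_self).aestronglyMeasurable measurableSet_Ioc) ?_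
    filter_upwards [ae_restrict_mem measurableSet_Ioc] with s hs
    have hs0 : 0 < s := hs.1
    have hnn : 0 ≤ s ^ (-ν - 1) := Real.rpow_nonneg hs0.le _
    have hnn2 : 0 ≤ 1 - Real.exp (-(a * s)) := aux_one_sub_exp_nonneg (by positivity)
    rw [Real.norm_eq_abs, abs_of_nonneg (mul_nonneg hnn hnn2)]
    have h1 : 1 - Real.exp (-(a * s)) ≤ a * s := aux_one_sub_exp_le _
    have hss : s ^ (-ν - 1) * s = s ^ (-ν) := by
      rw [← Real.rpow_add_one hs0.ne' (-ν - 1)]; norm_num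
    calc s ^ (-ν - 1) * (1 - Real.exp (-(a * s))) ≤ s ^ (-ν - 1) * (a * s) :=
          mul_le_mul_of_nonneg_left h1 hnn
      _ = a * s ^ (-ν) := by rw [← hss]; ring
  · -- on Ioi 1, dominate by s ^ (-ν - 1)
    refine Integrable.mono' (integrableOn_Ioi_rpow_of_lt (a := -ν - 1) (by linarith) one_pos)
      ((gfun_contOn.mono (Ioi_subset_Ioi zero_le_one)).aestronglyMeasurable measurableSet_Ioi) ?_
    filter_upwards [ae_restrict_mem measurableSet_Ioi] with s hs
    have hs0 : (0:ℝ) < s := lt_trans one_pos hs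
    have hnn : 0 ≤ s ^ (-ν - 1) := Real.rpow_nonneg hs0.le _
    have hnn2 : 0 ≤ 1 - Real.exp (-(a * s)) := aux_one_sub_exp_nonneg (by positivity)
    rw [Real.norm_eq_abs, abs_of_nonneg (mul_nonneg hnn hnn2)]
    nlinarith [Real.exp_nonneg (-(a * s))]

lemma integrableOn_sec {ν : ℝ} (hν1 : ν < 1) {a : ℝ} (ha : 0 < a) :
    IntegrableOn (fun s : ℝ => s ^ (-ν) * Real.exp (-(a * s))) (Ioi 0) := by
  have h := integrableOn_rpow_mul_exp_neg_mul_rpow (p := 1) (s := -ν) (b := a)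
    (by linarith) one_pos ha
  refine h.congr_fun (fun s hs => ?_) measurableSet_Ioi
  simp only [Real.rpow_one]; ring_nf

lemma integral_gfun {ν : ℝ} (hν0 : 0 < ν) (hν1 : ν < 1) {a : ℝ} (ha : 0 ≤ a) :
    ∫ s in Ioi (0:ℝ), s ^ (-ν - 1) * (1 - Real.exp (-(a * s)))
      = Real.Gamma (1 - ν) / ν * a ^ ν := by
  rcases eq_or_lt_of_le ha with rfl | ha0
  · simp [Real.zero_rpow hν0.ne']
  -- FTC part : ∫ H' = 0
  have hν : (ν : ℝ) ≠ 0 := hν0.ne'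
  set H : ℝ → ℝ := fun s => -(1 / ν) * (s ^ (-ν) * (1 - Real.exp (-(a * s)))) with hHdef
  have H0 : H 0 = 0 := by simp [hHdef]
  have hderiv : ∀ s ∈ Ioi (0:ℝ), HasDerivAt H
      (s ^ (-ν - 1) * (1 - Real.exp (-(a * s))) - a / ν * (s ^ (-ν) * Real.exp (-(a * s)))) s := by
    intro s hs
    have h1 : HasDerivAt (fun s : ℝ => s ^ (-ν)) (-ν * s ^ (-ν - 1)) s :=
      Real.hasDerivAt_rpow_const (Or.inl (ne_of_gt hs))
    have h2 : HasDerivAt (fun s : ℝ => 1 - Real.exp (-(a * s))) (a * Real.exp (-(a * s))) s := by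
      have hlin : HasDerivAt (fun s : ℝ => -(a * s)) (-a) s := by
        simpa using ((hasDerivAt_id s).const_mul a).fun_neg
      have := (hlin.exp).const_sub 1
      simpa [mul_comm] using this
    have h3 := (h1.fun_mul h2).const_mul (-(1 / ν))
    refine h3.congr_deriv ?_
    linear_combination (s ^ (-ν - 1) * (1 - Real.exp (-(a * s)))) * (inv_mul_cancel₀ hν)
  have hcont : ContinuousWithinAt H (Ici 0) 0 := by
    rw [ContinuousWithinAt, H0]
    apply squeeze_zero_norm' (a := fun s => a / ν * s ^ (1 - ν))
    · filter_upwards [eventually_mem_nhdsWithin] with s (hs : s ∈ Ici (0:ℝ))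
      rcases eq_or_lt_of_le (mem_Ici.mp hs) with rfl | hs0
      · simp [hHdef, Real.zero_rpow (by linarith : (1:ℝ) - ν ≠ 0)]
      · have hb1 : 0 ≤ s ^ (-ν) := Real.rpow_nonneg hs0.le _
        have hb2 : 0 ≤ 1 - Real.exp (-(a * s)) := aux_one_sub_exp_nonneg (by positivity)
        have hXnn : 0 ≤ s ^ (-ν) * (1 - Real.exp (-(a * s))) := mul_nonneg hb1 hb2
        have hH : ‖H s‖ = 1 / ν * (s ^ (-ν) * (1 - Real.exp (-(a * s)))) := by
          simp only [hHdef, Real.norm_eq_abs, abs_mul, abs_neg,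
            abs_of_nonneg hXnn, abs_of_nonneg (by positivity : (0:ℝ) ≤ 1 / ν)]
        rw [hH]
        have h1 : 1 - Real.exp (-(a * s)) ≤ a * s := aux_one_sub_exp_le _
        have hss : s ^ (-ν) * s = s ^ (1 - ν) := by
          rw [← Real.rpow_add_one hs0.ne' (-ν)]; ring_nf
        calc 1 / ν * (s ^ (-ν) * (1 - Real.exp (-(a * s))))
            ≤ 1 / ν * (s ^ (-ν) * (a * s)) := by
              apply mul_le_mul_of_nonneg_left (mul_le_mul_of_nonneg_left h1 hb1)
              positivity
          _ = a / ν * s ^ (1 - ν) := by rw [← hss]; ring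
    · -- tendsto of bound to 0
      have hc : ContinuousAt (fun s : ℝ => s ^ (1 - ν)) 0 :=
        Real.continuousAt_rpow_const 0 (1 - ν) (Or.inr (by linarith))
      have := (hc.tendsto.mono_left (nhdsWithin_le_nhds : 𝓝[Ici (0:ℝ)] 0 ≤ 𝓝 0)).const_mul (a / ν)
      simpa [Real.zero_rpow (by linarith : (1:ℝ) - ν ≠ 0)] using this
  have htop : Tendsto H atTop (𝓝 0) := by
    apply squeeze_zero_norm' (a := fun s : ℝ => 1 / ν * s ^ (-ν))
    · filter_upwards [eventually_gt_atTop (0:ℝ)] with s hs0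
      have hb1 : 0 ≤ s ^ (-ν) := Real.rpow_nonneg hs0.le _
      have hb2 : 0 ≤ 1 - Real.exp (-(a * s)) := aux_one_sub_exp_nonneg (by positivity)
      have hb3 : 1 - Real.exp (-(a * s)) ≤ 1 := by
        have := Real.exp_nonneg (-(a * s)); linarith
      have hXnn : 0 ≤ s ^ (-ν) * (1 - Real.exp (-(a * s))) := mul_nonneg hb1 hb2
      simp only [hHdef, Real.norm_eq_abs, abs_mul, abs_neg,
        abs_of_nonneg hXnn, abs_of_nonneg (by positivity : (0:ℝ) ≤ 1 / ν)]
      calc 1 / ν * (s ^ (-ν) * (1 - Real.exp (-(a * s))))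
          ≤ 1 / ν * (s ^ (-ν) * 1) := by
            apply mul_le_mul_of_nonneg_left (mul_le_mul_of_nonneg_left hb3 hb1)
            positivity
        _ = 1 / ν * s ^ (-ν) := by ring
    · have := (tendsto_rpow_neg_atTop hν0).const_mul (1 / ν)
      simpa using this
  have hsec : IntegrableOn (fun s : ℝ => s ^ (-ν) * Real.exp (-(a * s))) (Ioi 0) :=
    integrableOn_sec hν1 ha0
  have hint1 : IntegrableOn (fun s : ℝ =>
      s ^ (-ν - 1) * (1 - Real.exp (-(a * s))) - a / ν * (s ^ (-ν) * Real.exp (-(a * s))))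
      (Ioi 0) := (integrableOn_gfun hν0 hν1 ha).sub (hsec.const_mul _)
  have hFTC := integral_Ioi_of_hasDerivAt_of_tendsto hcont hderiv hint1 htop
  rw [H0, sub_zero] at hFTC
  have hkey := Real.integral_rpow_mul_exp_neg_mul_Ioi (a := 1 - ν) (r := a)
    (by linarith) ha0
  rw [show (1 - ν - 1 : ℝ) = -ν by ring] at hkey
  have hsplit : ∫ s in Ioi (0:ℝ), s ^ (-ν - 1) * (1 - Real.exp (-(a * s)))
      = (∫ s in Ioi (0:ℝ), (s ^ (-ν - 1) * (1 - Real.exp (-(a * s)))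
          - a / ν * (s ^ (-ν) * Real.exp (-(a * s)))))
        + (∫ s in Ioi (0:ℝ), a / ν * (s ^ (-ν) * Real.exp (-(a * s)))) := by
    rw [← integral_add hint1 (hsec.const_mul _)]
    congr 1
    funext s
    ring
  rw [hsplit, hFTC, integral_const_mul]
  have hexp : ∀ s : ℝ, Real.exp (-(a * s)) = Real.exp (-(a * s)) := fun _ => rfl
  rw [show (fun s : ℝ => s ^ (-ν) * Real.exp (-(a * s))) = fun s : ℝ => s ^ (-ν) * Real.exp (-(a * s)) from rfl]
  rw [hkey]
  -- now: 0 + a / ν * ((1 / a) ^ (1 - ν) * Real.Gamma (1 - ν)) = Real.Gamma (1 - ν) / ν * a ^ ν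
  have hpow : (1 / a) ^ (1 - ν) = (a ^ (1 - ν))⁻¹ := by
    rw [one_div, Real.inv_rpow ha0.le]
  have haa : a ^ ν * a ^ (1 - ν) = a := by
    rw [← Real.rpow_add ha0, show ν + (1 - ν) = (1:ℝ) by ring, Real.rpow_one]
  have hpos : (0:ℝ) < a ^ (1 - ν) := Real.rpow_pos_of_pos ha0 _
  rw [hpow, zero_add]
  calc a / ν * ((a ^ (1 - ν))⁻¹ * Real.Gamma (1 - ν))
      = (a ^ ν * a ^ (1 - ν)) / ν * ((a ^ (1 - ν))⁻¹ * Real.Gamma (1 - ν)) := by rw [haa]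
    _ = Real.Gamma (1 - ν) / ν * a ^ ν * (a ^ (1 - ν) * (a ^ (1 - ν))⁻¹) := by ring
    _ = Real.Gamma (1 - ν) / ν * a ^ ν := by rw [mul_inv_cancel₀ hpos.ne']; ring

lemma phi_eq {ν : ℝ} (n : ℕ) : EqOn
    (fun s : ℝ => s ^ (-ν - 1) * Real.exp (-((n : ℝ) * s)) * (1 - Real.exp (-s)))
    (fun s : ℝ => s ^ (-ν - 1) * (1 - Real.exp (-(((n : ℝ) + 1) * s)))
      - s ^ (-ν - 1) * (1 - Real.exp (-((n : ℝ) * s)))) (Ioi 0) := by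
  intro s _
  simp only
  have h : Real.exp (-(((n : ℝ) + 1) * s)) = Real.exp (-((n : ℝ) * s)) * Real.exp (-s) := by
    rw [← Real.exp_add]; ring_nf
  rw [h]; ring

lemma integrableOn_phi {ν : ℝ} (hν0 : 0 < ν) (hν1 : ν < 1) (n : ℕ) :
    IntegrableOn (fun s : ℝ => s ^ (-ν - 1) * Real.exp (-((n : ℝ) * s)) * (1 - Real.exp (-s)))
      (Ioi 0) := by
  have h1 := integrableOn_gfun hν0 hν1 (a := (n : ℝ) + 1) (by positivity)
  have h0 := integrableOn_gfun hν0 hν1 (a := (n : ℝ)) n.cast_nonneg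
  exact IntegrableOn.congr_fun (h1.sub h0) (fun s hs => ((phi_eq n) hs).symm) measurableSet_Ioi

lemma integral_phi {ν : ℝ} (hν0 : 0 < ν) (hν1 : ν < 1) (n : ℕ) :
    ∫ s in Ioi (0:ℝ), s ^ (-ν - 1) * Real.exp (-((n : ℝ) * s)) * (1 - Real.exp (-s))
      = Real.Gamma (1 - ν) / ν * (((n : ℝ) + 1) ^ ν - (n : ℝ) ^ ν) := by
  have h1 := integrableOn_gfun hν0 hν1 (a := (n : ℝ) + 1) (by positivity)
  have h0 := integrableOn_gfun hν0 hν1 (a := (n : ℝ)) n.cast_nonneg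
  rw [setIntegral_congr_fun measurableSet_Ioi (phi_eq n), integral_sub h1 h0,
    integral_gfun hν0 hν1 (by positivity : (0:ℝ) ≤ (n : ℝ) + 1),
    integral_gfun hν0 hν1 n.cast_nonneg]
  ring

lemma summable_bound {x : ℝ} (hx : 0 < x) (c : ℝ) :
    Summable (fun n : ℕ => ((n : ℝ) + c) * Real.exp (-((n : ℝ) * x))) := by
  have hr : ‖Real.exp (-x)‖ < 1 := by
    rw [Real.norm_eq_abs, abs_of_nonneg (Real.exp_nonneg _)]
    exact Real.exp_lt_one_iff.mpr (by linarith)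
  have h1 : Summable (fun n : ℕ => (n : ℝ) ^ 1 * Real.exp (-x) ^ n) :=
    summable_pow_mul_geometric_of_norm_lt_one 1 hr
  have h2 : Summable (fun n : ℕ => c * Real.exp (-x) ^ n) :=
    (summable_geometric_of_norm_lt_one hr).mul_left c
  have := h1.add h2
  refine this.congr fun n => ?_
  rw [← Real.exp_nat_mul]
  ring_nf

lemma const_identity {ν : ℝ} (hν0 : 0 < ν) (hν1 : ν < 1) :
    Real.sin (Real.pi * ν) / Real.pi * (Real.Gamma (1 - ν) / ν) = 1 / Real.Gamma (1 + ν) := by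
  have hrefl := Real.Gamma_mul_Gamma_one_sub ν
  have hsin : 0 < Real.sin (Real.pi * ν) :=
    Real.sin_pos_of_pos_of_lt_pi (by positivity) (by nlinarith [Real.pi_pos])
  have hΓν : 0 < Real.Gamma ν := Real.Gamma_pos_of_pos hν0
  have hΓ1ν : 0 < Real.Gamma (1 - ν) := Real.Gamma_pos_of_pos (by linarith)
  have hG1 : Real.Gamma (1 + ν) = ν * Real.Gamma ν := by
    rw [add_comm]; exact Real.Gamma_add_one hν0.ne'
  have hπ : Real.pi ≠ 0 := Real.pi_ne_zero
  rw [hG1]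
  have h2 : Real.sin (Real.pi * ν) * (Real.Gamma ν * Real.Gamma (1 - ν)) = Real.pi := by
    rw [hrefl]; field_simp
  field_simp
  nlinarith [h2]

theorem stmt12 (ν : ℝ) (hν0 : 0 < ν) (hν1 : ν < 1) (z : ℂ) (hz : 0 < z.re) :
    Summable (fun n : ℕ =>
      ((((n : ℝ) + 2) ^ ν - ((n : ℝ) + 1) ^ ν : ℝ) : ℂ)
        * Complex.exp (-(((n : ℕ) + 1 : ℕ) : ℂ) * z)) ∧
    IntegrableOn (fun s : ℝ =>
      (↑(s ^ (-ν)) * (1 - Complex.exp (-(s : ℂ)))) / ((s : ℂ) * (1 - Complex.exp (-z - (s : ℂ)))))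
      (Set.Ioi 0) ∧
    ((1 / Real.Gamma (1 + ν) : ℝ) : ℂ)
        * (1 + ∑' n : ℕ, ((((n : ℝ) + 2) ^ ν - ((n : ℝ) + 1) ^ ν : ℝ) : ℂ)
            * Complex.exp (-(((n : ℕ) + 1 : ℕ) : ℂ) * z))
      = psiC ν z := by
  have hπ := Real.pi_pos
  set a : ℕ → ℂ := fun n =>
    ((((n : ℝ) + 1) ^ ν - (n : ℝ) ^ ν : ℝ) : ℂ) * Complex.exp (-(n : ℂ) * z) with ha
  -- coefficient bounds
  have hcoeff_nn : ∀ n : ℕ, 0 ≤ ((n : ℝ) + 1) ^ ν - (n : ℝ) ^ ν := fun n =>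
    sub_nonneg.mpr (Real.rpow_le_rpow n.cast_nonneg (by linarith) hν0.le)
  have hcoeff_le : ∀ n : ℕ, ((n : ℝ) + 1) ^ ν - (n : ℝ) ^ ν ≤ (n : ℝ) + 1 := by
    intro n
    have h3 : ((n : ℝ) + 1) ^ ν ≤ ((n : ℝ) + 1) ^ (1 : ℝ) :=
      Real.rpow_le_rpow_of_exponent_le (by simp) hν1.le
    rw [Real.rpow_one] at h3
    have h4 : 0 ≤ (n : ℝ) ^ ν := Real.rpow_nonneg n.cast_nonneg _
    linarith
  have hre : ∀ n : ℕ, (-(n : ℂ) * z).re = -((n : ℝ) * z.re) := by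
    intro n; simp [Complex.mul_re]
  have hnorm : ∀ n : ℕ, ‖a n‖ ≤ ((n : ℝ) + 1) * Real.exp (-((n : ℝ) * z.re)) := by
    intro n
    rw [ha]
    simp only [norm_mul, Complex.norm_real, Real.norm_eq_abs, Complex.norm_exp, hre n]
    rw [abs_of_nonneg (hcoeff_nn n)]
    exact mul_le_mul_of_nonneg_right (hcoeff_le n) (Real.exp_nonneg _)
  have hsum_a : Summable a :=
    Summable.of_norm_bounded (summable_bound hz 1) hnorm
  have hshift : ∀ n : ℕ,
      ((((n : ℝ) + 2) ^ ν - ((n : ℝ) + 1) ^ ν : ℝ) : ℂ)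
        * Complex.exp (-(((n : ℕ) + 1 : ℕ) : ℂ) * z) = a (n + 1) := by
    intro n
    rw [ha]
    push_cast
    ring_nf
  have hsum1 : Summable (fun n : ℕ =>
      ((((n : ℝ) + 2) ^ ν - ((n : ℝ) + 1) ^ ν : ℝ) : ℂ)
        * Complex.exp (-(((n : ℕ) + 1 : ℕ) : ℂ) * z)) := by
    have hinj : Function.Injective (fun n : ℕ => n + 1) := add_left_injective 1
    exact (hsum_a.comp_injective hinj).congr fun n => (hshift n).symm
  -- the integrand
  set f : ℝ → ℂ := fun s =>
    (↑(s ^ (-ν)) * (1 - Complex.exp (-(s : ℂ)))) / ((s : ℂ) * (1 - Complex.exp (-z - (s : ℂ))))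
    with hf
  -- denominator bounds
  have hwnorm : ∀ s : ℝ, 0 < s → ‖Complex.exp (-z - (s : ℂ))‖ = Real.exp (-z.re - s) := by
    intro s hs
    rw [Complex.norm_exp]
    simp
  have hwlt : ∀ s : ℝ, 0 < s → ‖Complex.exp (-z - (s : ℂ))‖ < 1 := by
    intro s hs
    rw [hwnorm s hs]
    exact Real.exp_lt_one_iff.mpr (by linarith)
  have hw1 : ∀ s : ℝ, 0 < s → (1 : ℂ) - Complex.exp (-z - (s : ℂ)) ≠ 0 := by
    intro s hs h
    rw [sub_eq_zero] at h
    have := hwlt s hs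
    rw [← h] at this
    simp at this
  have hwlb : ∀ s : ℝ, 0 < s →
      1 - Real.exp (-z.re) ≤ ‖(1 : ℂ) - Complex.exp (-z - (s : ℂ))‖ := by
    intro s hs
    have h1 : ‖(1 : ℂ)‖ - ‖Complex.exp (-z - (s : ℂ))‖ ≤ ‖(1 : ℂ) - Complex.exp (-z - (s : ℂ))‖ :=
      norm_sub_norm_le _ _
    rw [norm_one, hwnorm s hs] at h1
    have h2 : Real.exp (-z.re - s) ≤ Real.exp (-z.re) :=
      Real.exp_le_exp.mpr (by linarith)
    linarith
  have hexpz : 0 < 1 - Real.exp (-z.re) :=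
    sub_pos.mpr (Real.exp_lt_one_iff.mpr (by linarith))
  -- integrability of f
  have hfcont : ContinuousOn f (Set.Ioi 0) := by
    rw [hf]
    apply ContinuousOn.div
    · apply ContinuousOn.mul
      · exact Complex.continuous_ofReal.comp_continuousOn
          (fun s hs => (Real.continuousAt_rpow_const s _ (Or.inl (ne_of_gt hs))).continuousWithinAt)
      · exact (continuous_const.sub
          (Complex.continuous_exp.comp Complex.continuous_ofReal.neg)).continuousOn
    · exact (Complex.continuous_ofReal.mul (continuous_const.sub
        (Complex.continuous_exp.comp (continuous_const.sub Complex.continuous_ofReal)))).continuousOn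
    · intro s hs
      exact mul_ne_zero (by exact_mod_cast (ne_of_gt hs)) (hw1 s hs)
  have hfbound : ∀ s : ℝ, 0 < s →
      ‖f s‖ ≤ (1 - Real.exp (-z.re))⁻¹ * (s ^ (-ν - 1) * (1 - Real.exp (-s))) := by
    intro s hs
    have hnum : ‖(↑(s ^ (-ν)) * (1 - Complex.exp (-(s : ℂ))) : ℂ)‖
        = s ^ (-ν) * (1 - Real.exp (-s)) := by
      have h1 : ((1 : ℂ) - Complex.exp (-(s : ℂ))) = ((1 - Real.exp (-s) : ℝ) : ℂ) := by
        push_cast [Complex.ofReal_exp]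
        ring
      rw [h1, ← Complex.ofReal_mul, Complex.norm_real, Real.norm_eq_abs, abs_of_nonneg]
      exact mul_nonneg (Real.rpow_nonneg hs.le _) (aux_one_sub_exp_nonneg hs.le)
    rw [hf]
    simp only [norm_div]
    rw [hnum, norm_mul, Complex.norm_real, Real.norm_eq_abs, abs_of_nonneg hs.le]
    have hden_pos : 0 < s * ‖(1 : ℂ) - Complex.exp (-z - (s : ℂ))‖ := by
      apply mul_pos hs
      exact lt_of_lt_of_le hexpz (hwlb s hs)
    have hden_lb : s * (1 - Real.exp (-z.re)) ≤ s * ‖(1 : ℂ) - Complex.exp (-z - (s : ℂ))‖ :=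
      mul_le_mul_of_nonneg_left (hwlb s hs) hs.le
    have hnum_nn : 0 ≤ s ^ (-ν) * (1 - Real.exp (-s)) :=
      mul_nonneg (Real.rpow_nonneg hs.le _) (aux_one_sub_exp_nonneg hs.le)
    calc s ^ (-ν) * (1 - Real.exp (-s)) / (s * ‖(1 : ℂ) - Complex.exp (-z - (s : ℂ))‖)
        ≤ s ^ (-ν) * (1 - Real.exp (-s)) / (s * (1 - Real.exp (-z.re))) :=
          div_le_div_of_nonneg_left hnum_nn (by positivity) hden_lb
      _ = (1 - Real.exp (-z.re))⁻¹ * (s ^ (-ν - 1) * (1 - Real.exp (-s))) := by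
          have hss : s ^ (-ν - 1) = s ^ (-ν) / s := by
            rw [div_eq_mul_inv, ← Real.rpow_neg_one s, ← Real.rpow_add hs]
            ring_nf
          rw [hss]
          field_simp
  have hfint : IntegrableOn f (Set.Ioi 0) := by
    refine Integrable.mono'
      ((integrableOn_gfun hν0 hν1 (a := (1:ℝ)) zero_le_one).const_mul
        ((1 - Real.exp (-z.re))⁻¹))
      (hfcont.aestronglyMeasurable measurableSet_Ioi) ?_
    filter_upwards [ae_restrict_mem measurableSet_Ioi] with s hs
    have := hfbound s hs
    simpa [one_mul] using this
  -- the terms of the expansion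
  set F : ℕ → ℝ → ℂ := fun n s => Complex.exp (-(n : ℂ) * z) *
      ((s ^ (-ν - 1) * Real.exp (-((n : ℝ) * s)) * (1 - Real.exp (-s)) : ℝ) : ℂ) with hF
  have hFint : ∀ n : ℕ, IntegrableOn (F n) (Set.Ioi 0) :=
    fun n => ((integrableOn_phi hν0 hν1 n).ofReal.const_mul _)
  have hFmeas : ∀ n : ℕ, AEStronglyMeasurable (F n) (volume.restrict (Set.Ioi 0)) :=
    fun n => (hFint n).aestronglyMeasurable
  -- pointwise expansion
  have hpoint : ∀ s ∈ Set.Ioi (0:ℝ), f s = ∑' n : ℕ, F n s := by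
    intro s hs
    rw [Set.mem_Ioi] at hs
    have hFeq : ∀ n : ℕ, F n s
        = ((s ^ (-ν - 1) * (1 - Real.exp (-s)) : ℝ) : ℂ) * Complex.exp (-z - (s : ℂ)) ^ n := by
      intro n
      rw [hF]
      simp only
      rw [← Complex.exp_nat_mul]
      push_cast [Complex.ofReal_exp]
      have harg : ((n : ℂ) * (-z - (s : ℂ))) = (-(n : ℂ) * z) + (-((n : ℂ) * (s : ℂ))) := by ring
      rw [harg, Complex.exp_add]
      ring
    rw [tsum_congr hFeq, tsum_mul_left, tsum_geometric_of_norm_lt_one (hwlt s hs), hf]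
    simp only
    have h1 : ((1 : ℂ) - Complex.exp (-(s : ℂ))) = ((1 - Real.exp (-s) : ℝ) : ℂ) := by
      push_cast [Complex.ofReal_exp]
      ring
    have hss : s ^ (-ν - 1) = s ^ (-ν) / s := by
      rw [div_eq_mul_inv, ← Real.rpow_neg_one s, ← Real.rpow_add hs]
      ring_nf
    rw [h1, hss]
    have hsne : (s : ℂ) ≠ 0 := by exact_mod_cast hs.ne'
    push_cast
    field_simp
  -- lintegral values
  have hphinn : ∀ n : ℕ, ∀ s : ℝ, 0 < s →
      0 ≤ s ^ (-ν - 1) * Real.exp (-((n : ℝ) * s)) * (1 - Real.exp (-s)) := by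
    intro n s hs
    have := aux_one_sub_exp_nonneg hs.le
    have := Real.rpow_nonneg hs.le (-ν - 1)
    have := Real.exp_nonneg (-((n : ℝ) * s))
    positivity
  have hlint : ∀ n : ℕ, ∫⁻ s in Set.Ioi (0:ℝ), ‖F n s‖₊
      = ENNReal.ofReal (Real.exp (-((n : ℝ) * z.re))
          * (Real.Gamma (1 - ν) / ν * (((n : ℝ) + 1) ^ ν - (n : ℝ) ^ ν))) := by
    intro n
    have hInt : Integrable (fun s : ℝ => Real.exp (-((n : ℝ) * z.re))
        * (s ^ (-ν - 1) * Real.exp (-((n : ℝ) * s)) * (1 - Real.exp (-s))))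
        (volume.restrict (Set.Ioi 0)) := (integrableOn_phi hν0 hν1 n).const_mul _
    have hnn : ∀ᵐ s ∂(volume.restrict (Set.Ioi (0:ℝ))), 0 ≤ Real.exp (-((n : ℝ) * z.re))
        * (s ^ (-ν - 1) * Real.exp (-((n : ℝ) * s)) * (1 - Real.exp (-s))) := by
      filter_upwards [ae_restrict_mem measurableSet_Ioi] with s hs
      exact mul_nonneg (Real.exp_nonneg _) (hphinn n s hs)
    have h1 : ∫⁻ s in Set.Ioi (0:ℝ), (‖F n s‖₊ : ℝ≥0∞)
        = ∫⁻ s in Set.Ioi (0:ℝ), ENNReal.ofReal (Real.exp (-((n : ℝ) * z.re))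
            * (s ^ (-ν - 1) * Real.exp (-((n : ℝ) * s)) * (1 - Real.exp (-s)))) := by
      apply lintegral_congr_ae
      filter_upwards [ae_restrict_mem measurableSet_Ioi] with s hs
      rw [← enorm_eq_nnnorm, ← ofReal_norm]
      congr 1
      rw [hF]
      simp only [norm_mul, Complex.norm_exp, Complex.norm_real, Real.norm_eq_abs, hre n,
        abs_of_nonneg (hphinn n s hs)]
      rw [abs_of_nonneg (Real.rpow_nonneg (le_of_lt hs) _), abs_of_nonneg (Real.exp_nonneg _),
        abs_of_nonneg (aux_one_sub_exp_nonneg (le_of_lt hs))]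
    rw [h1, ← ofReal_integral_eq_lintegral_ofReal hInt hnn, integral_const_mul,
      integral_phi hν0 hν1 n]
  -- summability of the lintegral values
  have hGnn : 0 ≤ Real.Gamma (1 - ν) / ν :=
    div_nonneg (Real.Gamma_pos_of_pos (by linarith)).le hν0.le
  have hsumA : Summable (fun n : ℕ => Real.exp (-((n : ℝ) * z.re))
      * (Real.Gamma (1 - ν) / ν * (((n : ℝ) + 1) ^ ν - (n : ℝ) ^ ν))) := by
    apply Summable.of_nonneg_of_le
      (fun n => mul_nonneg (Real.exp_nonneg _) (mul_nonneg hGnn (hcoeff_nn n)))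
      (fun n => ?_) ((summable_bound hz 1).mul_left (Real.Gamma (1 - ν) / ν))
    have h2 := hcoeff_le n
    have h3 := Real.exp_nonneg (-((n : ℝ) * z.re))
    calc Real.exp (-((n : ℝ) * z.re)) * (Real.Gamma (1 - ν) / ν * (((n : ℝ) + 1) ^ ν - (n : ℝ) ^ ν))
        = Real.Gamma (1 - ν) / ν * ((((n : ℝ) + 1) ^ ν - (n : ℝ) ^ ν) * Real.exp (-((n : ℝ) * z.re))) := by ring
      _ ≤ Real.Gamma (1 - ν) / ν * (((n : ℝ) + 1) * Real.exp (-((n : ℝ) * z.re))) :=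
          mul_le_mul_of_nonneg_left (mul_le_mul_of_nonneg_right h2 h3) hGnn
  have hne : ∑' n : ℕ, ∫⁻ s in Set.Ioi (0:ℝ), ‖F n s‖₊ ≠ ⊤ := by
    simp_rw [hlint]
    rw [← ENNReal.ofReal_tsum_of_nonneg
      (fun n => mul_nonneg (Real.exp_nonneg _) (mul_nonneg hGnn (hcoeff_nn n))) hsumA]
    exact ENNReal.ofReal_ne_top
  -- the swap
  have hswap : ∫ s in Set.Ioi (0:ℝ), f s = ∑' n : ℕ, ∫ s in Set.Ioi (0:ℝ), F n s := by
    rw [setIntegral_congr_fun measurableSet_Ioi hpoint]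
    exact integral_tsum hFmeas hne
  have hFval : ∀ n : ℕ, ∫ s in Set.Ioi (0:ℝ), F n s
      = ((Real.Gamma (1 - ν) / ν : ℝ) : ℂ) * a n := by
    intro n
    rw [hF]
    simp only
    rw [MeasureTheory.integral_const_mul]
    have hIR : ∫ s in Set.Ioi (0:ℝ),
        ((s ^ (-ν - 1) * Real.exp (-((n : ℝ) * s)) * (1 - Real.exp (-s)) : ℝ) : ℂ)
        = ((∫ s in Set.Ioi (0:ℝ),
            s ^ (-ν - 1) * Real.exp (-((n : ℝ) * s)) * (1 - Real.exp (-s)) : ℝ) : ℂ) :=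
      integral_ofReal
    rw [hIR, integral_phi hν0 hν1 n, ha]
    push_cast
    ring
  have hintf : ∫ s in Set.Ioi (0:ℝ), f s
      = ((Real.Gamma (1 - ν) / ν : ℝ) : ℂ) * ∑' n : ℕ, a n := by
    rw [hswap, tsum_congr hFval, tsum_mul_left]
  -- final assembly
  refine ⟨hsum1, hfint, ?_⟩
  have hS : ∑' n : ℕ, a n
      = 1 + ∑' n : ℕ, ((((n : ℝ) + 2) ^ ν - ((n : ℝ) + 1) ^ ν : ℝ) : ℂ)
          * Complex.exp (-(((n : ℕ) + 1 : ℕ) : ℂ) * z) := by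
    rw [hsum_a.tsum_eq_zero_add]
    congr 1
    · rw [ha]
      simp [Real.one_rpow, Real.zero_rpow hν0.ne']
    · exact (tsum_congr hshift).symm
  rw [← hS, psiC, hintf]
  rw [← mul_assoc, ← Complex.ofReal_mul, const_identity hν0 hν1]
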